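/- Let p be a prime number, k a perfect field of characteristic p, and 𝔖 := W(k)⟦u⟧ the power series ring over the ring W(k) of p-typical Witt vectors of k. Let φ : 𝔖 → 𝔖 be the ring homomorphism determined by applying the Witt-vector Frobenius F to each coefficient and substituting u ↦ u^p, i.e. φ(Σ_n a_n u^n) = Σ_n F(a_n) u^{pn}. Then 𝔖, regarded as a module over itself by restriction of scalars along φ, is free of rank p with basis 1, u, u^2, …, u^{p−1}; in particular, the ring homomorphism φ is faithfully flat. -/

import Mathlib

/-- A ring homomorphism `f : R → S` is *faithfully flat* if it makes `S` a
faithfully flat `R`-module (the `R`-module structure on `S` being restriction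
of scalars along `f`). -/
def RingHomFaithfullyFlat {R S : Type*} [CommRing R] [CommRing S] (f : R →+* S) : Prop :=
  letI : Module R S := f.toModule
  Module.FaithfullyFlat R S

/-!
Let p be a prime, k a perfect field of characteristic p, 𝔖 := W(k)⟦u⟧, and
φ : 𝔖 → 𝔖 the ring homomorphism applying the Witt-vector Frobenius to each
coefficient and substituting u ↦ u^p (so the coefficient of φ(f) in degree p·n
is F(aₙ) and its coefficients in degrees not divisible by p vanish).  Then 𝔖,
as a module over itself via φ, is free of rank p with basis 1, u, …, u^{p−1}
(i.e. every f ∈ 𝔖 is uniquely f = Σ_{i<p} φ(aᵢ)·uⁱ); in particular φ is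
faithfully flat.
-/

section Aux

variable (p : ℕ) [hp : Fact p.Prime] (k : Type*) [Field k] [CharP k p] [PerfectRing k p]
variable (φ : PowerSeries (WittVector p k) →+* PowerSeries (WittVector p k))

set_option linter.unusedSectionVars false

theorem aux_coeff_sum
    (hφ_coeff : ∀ (f : PowerSeries (WittVector p k)) (n : ℕ),
      PowerSeries.coeff (R := WittVector p k) (p * n) (φ f) =
        WittVector.frobenius (PowerSeries.coeff (R := WittVector p k) n f))
    (hφ_nondiv : ∀ (f : PowerSeries (WittVector p k)) (m : ℕ), ¬ p ∣ m →
      PowerSeries.coeff (R := WittVector p k) m (φ f) = 0)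
    (a : Fin p → PowerSeries (WittVector p k)) (m : ℕ) :
    PowerSeries.coeff (R := WittVector p k) m (∑ i : Fin p, φ (a i) * PowerSeries.X ^ (i : ℕ)) =
      WittVector.frobenius (PowerSeries.coeff (R := WittVector p k) (m / p)
        (a ⟨m % p, Nat.mod_lt m hp.out.pos⟩)) := by
  have hpos := hp.out.pos
  rw [map_sum, Finset.sum_eq_single (⟨m % p, Nat.mod_lt m hpos⟩ : Fin p)]
  · rw [PowerSeries.coeff_mul_X_pow', if_pos (Nat.mod_le m p)]
    have h2 : m - m % p = p * (m / p) := by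
      have := Nat.div_add_mod m p; omega
    rw [h2, hφ_coeff]
  · intro b _ hb
    rw [PowerSeries.coeff_mul_X_pow']
    split_ifs with hle
    · apply hφ_nondiv
      rintro ⟨t, ht⟩
      apply hb
      have hbm : (b : ℕ) = m % p := by
        have : m = (b : ℕ) + p * t := by omega
        rw [this, Nat.add_mul_mod_self_left, Nat.mod_eq_of_lt b.isLt]
      exact Fin.ext hbm
    · rfl
  · intro h; exact absurd (Finset.mem_univ _) h

/-- candidate coefficient functions for the decomposition `f = Σ φ(aᵢ)·Xⁱ` -/
noncomputable def auxInv (f : PowerSeries (WittVector p k)) :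
    Fin p → PowerSeries (WittVector p k) :=
  fun i => PowerSeries.mk fun n =>
    (WittVector.frobeniusEquiv p k).symm (PowerSeries.coeff (R := WittVector p k) (p * n + i) f)

theorem aux_TI
    (hφ_coeff : ∀ (f : PowerSeries (WittVector p k)) (n : ℕ),
      PowerSeries.coeff (R := WittVector p k) (p * n) (φ f) =
        WittVector.frobenius (PowerSeries.coeff (R := WittVector p k) n f))
    (hφ_nondiv : ∀ (f : PowerSeries (WittVector p k)) (m : ℕ), ¬ p ∣ m →
      PowerSeries.coeff (R := WittVector p k) m (φ f) = 0)
    (f : PowerSeries (WittVector p k)) :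
    (∑ i : Fin p, φ (auxInv p k f i) * PowerSeries.X ^ (i : ℕ)) = f := by
  ext m
  rw [aux_coeff_sum p k φ hφ_coeff hφ_nondiv]
  simp only [auxInv, PowerSeries.coeff_mk]
  have : p * (m / p) + m % p = m := Nat.div_add_mod m p
  rw [this]
  have := (WittVector.frobeniusEquiv p k).apply_symm_apply
    (PowerSeries.coeff (R := WittVector p k) m f)
  simpa using this

theorem aux_IT
    (hφ_coeff : ∀ (f : PowerSeries (WittVector p k)) (n : ℕ),
      PowerSeries.coeff (R := WittVector p k) (p * n) (φ f) =
        WittVector.frobenius (PowerSeries.coeff (R := WittVector p k) n f))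
    (hφ_nondiv : ∀ (f : PowerSeries (WittVector p k)) (m : ℕ), ¬ p ∣ m →
      PowerSeries.coeff (R := WittVector p k) m (φ f) = 0)
    (a : Fin p → PowerSeries (WittVector p k)) :
    auxInv p k (∑ i : Fin p, φ (a i) * PowerSeries.X ^ (i : ℕ)) = a := by
  funext i
  ext n
  simp only [auxInv, PowerSeries.coeff_mk]
  rw [aux_coeff_sum p k φ hφ_coeff hφ_nondiv]
  have h1 : (p * n + (i : ℕ)) / p = n := by
    rw [Nat.mul_add_div hp.out.pos, Nat.div_eq_of_lt i.isLt, add_zero]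
  have h2 : (p * n + (i : ℕ)) % p = (i : ℕ) := by
    rw [Nat.mul_add_mod, Nat.mod_eq_of_lt i.isLt]
  have hi : (⟨(p * n + (i : ℕ)) % p, Nat.mod_lt _ hp.out.pos⟩ : Fin p) = i := Fin.ext h2
  rw [h1, hi]
  have := (WittVector.frobeniusEquiv p k).symm_apply_apply
    (PowerSeries.coeff (R := WittVector p k) n (a i))
  simpa using this

end Aux

theorem wittVector_powerSeries_frobenius_finite_free_and_faithfullyFlat
    (p : ℕ) [hp : Fact p.Prime] (k : Type*) [Field k] [CharP k p] [PerfectRing k p]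
    (φ : PowerSeries (WittVector p k) →+* PowerSeries (WittVector p k))
    (hφ_coeff : ∀ (f : PowerSeries (WittVector p k)) (n : ℕ),
      PowerSeries.coeff (R := WittVector p k) (p * n) (φ f) =
        WittVector.frobenius (PowerSeries.coeff (R := WittVector p k) n f))
    (hφ_nondiv : ∀ (f : PowerSeries (WittVector p k)) (m : ℕ), ¬ p ∣ m →
      PowerSeries.coeff (R := WittVector p k) m (φ f) = 0) :
    (∀ f : PowerSeries (WittVector p k),
      ∃! a : Fin p → PowerSeries (WittVector p k),
        f = ∑ i : Fin p, φ (a i) * PowerSeries.X ^ (i : ℕ)) ∧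
    RingHomFaithfullyFlat φ := by
  constructor
  · intro f
    refine ⟨auxInv p k f, (aux_TI p k φ hφ_coeff hφ_nondiv f).symm, ?_⟩
    intro b hb
    rw [hb, aux_IT p k φ hφ_coeff hφ_nondiv]
  · show @Module.FaithfullyFlat _ _ _ _ φ.toModule
    set S := PowerSeries (WittVector p k) with hS
    haveI : Nonempty (Fin p) := ⟨⟨0, hp.out.pos⟩⟩
    letI stdM : Module S (Fin p → S) := inferInstance
    haveI : Module.Free S (Fin p → S) := Module.Free.of_basis (Pi.basisFun _ (Fin p))
    haveI hFF : Module.FaithfullyFlat S (Fin p → S) := inferInstance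
    letI M : Module S S := φ.toModule
    refine @Module.FaithfullyFlat.of_linearEquiv S (Fin p → S) _ _ stdM S _ M hFF
      (LinearEquiv.symm ?_)
    exact
      { toFun := fun a => ∑ i : Fin p, φ (a i) * PowerSeries.X ^ (i : ℕ)
        map_add' := by
          intro a b
          simp [map_add, add_mul, Finset.sum_add_distrib]
        map_smul' := by
          intro r a
          show (∑ i : Fin p, φ (r * a i) * PowerSeries.X ^ (i : ℕ))
            = φ r * ∑ i : Fin p, φ (a i) * PowerSeries.X ^ (i : ℕ)
          simp [map_mul, Finset.mul_sum, mul_assoc]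
        invFun := auxInv p k
        left_inv := aux_IT p k φ hφ_coeff hφ_nondiv
        right_inv := aux_TI p k φ hφ_coeff hφ_nondiv }
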